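/- Let G be a finite simple connected graph, let a, b, c ∈ V(G) be three vertices each of degree one in G, and let H be a connected induced subgraph of G containing a, b, c whose vertex set is minimal with respect to inclusion among connected induced subgraphs containing a, b, c. Then either H is a subdivision of K_{1,3} with a, b, c as its three vertices of degree one, or H contains a triangle. -/

import Mathlib

open SimpleGraph

/-- `G` contains a subdivision of `K₄` as a (not necessarily induced) subgraph:
there are four branch vertices joined by six pairwise internally disjoint paths. -/
def HasK4Subdivision {V : Type*} (G : SimpleGraph V) : Prop :=
  ∃ b : Fin 4 → V, Function.Injective b ∧
    ∃ P : ∀ i j : Fin 4, i < j → G.Walk (b i) (b j),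
      (∀ (i j : Fin 4) (hij : i < j), (P i j hij).IsPath) ∧
      (∀ (i j : Fin 4) (hij : i < j) (k l : Fin 4) (hkl : k < l), (i, j) ≠ (k, l) → ∀ w,
        w ∈ (P i j hij).support → w ∈ (P k l hkl).support →
          (w = b i ∨ w = b j) ∧ (w = b k ∨ w = b l))

/-- A graph is series-parallel if it contains no subdivision of `K₄` as a
(not necessarily induced) subgraph. -/
def SeriesParallel {V : Type*} (G : SimpleGraph V) : Prop := ¬ HasK4Subdivision G

/-- `G` has an induced subgraph isomorphic to a subdivision of `K₄`: four branch
vertices joined by six pairwise internally disjoint paths, such that every edge of `G`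
between vertices of the union of the paths is an edge of one of the paths. -/
def HasInducedK4Subdivision {V : Type*} (G : SimpleGraph V) : Prop :=
  ∃ b : Fin 4 → V, Function.Injective b ∧
    ∃ P : ∀ i j : Fin 4, i < j → G.Walk (b i) (b j),
      (∀ (i j : Fin 4) (hij : i < j), (P i j hij).IsPath) ∧
      (∀ (i j : Fin 4) (hij : i < j) (k l : Fin 4) (hkl : k < l), (i, j) ≠ (k, l) → ∀ w,
        w ∈ (P i j hij).support → w ∈ (P k l hkl).support →
          (w = b i ∨ w = b j) ∧ (w = b k ∨ w = b l)) ∧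
      (∀ a c : V, (∃ (i j : Fin 4) (hij : i < j), a ∈ (P i j hij).support) →
        (∃ (i j : Fin 4) (hij : i < j), c ∈ (P i j hij).support) → G.Adj a c →
          ∃ (i j : Fin 4) (hij : i < j), s(a, c) ∈ (P i j hij).edges)

/-- `G` is ISK4-free: no induced subgraph of `G` is a subdivision of `K₄`. -/
def ISK4Free {V : Type*} (G : SimpleGraph V) : Prop := ¬ HasInducedK4Subdivision G

/-- `G` is triangle-free. -/
def TriangleFree {V : Type*} (G : SimpleGraph V) : Prop := G.CliqueFree 3

/-- `G` has no induced subgraph isomorphic to `K₃,₃`. -/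
def K33Free {V : Type*} (G : SimpleGraph V) : Prop :=
  ¬ ∃ a b : Fin 3 → V, Function.Injective a ∧ Function.Injective b ∧
    (∀ i j, a i ≠ b j) ∧ (∀ i j, G.Adj (a i) (b j)) ∧
    (∀ i j, ¬ G.Adj (a i) (a j)) ∧ (∀ i j, ¬ G.Adj (b i) (b j))

/-- `C` is the vertex set of an induced cycle of `G`: the induced subgraph on `C` is
connected and every vertex of `C` has exactly two neighbors in `C`. -/
def IsInducedCycle {V : Type*} (G : SimpleGraph V) (C : Set V) : Prop :=
  C.Finite ∧ 3 ≤ C.ncard ∧ (G.induce C).Connected ∧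
    ∀ v ∈ C, (G.neighborSet v ∩ C).ncard = 2

/-- A hole is an induced cycle of length at least 4. -/
def IsHole {V : Type*} (G : SimpleGraph V) (C : Set V) : Prop :=
  IsInducedCycle G C ∧ 4 ≤ C.ncard

/-- `(C, x)` is a wheel: `C` is a hole and `x` has at least three neighbors in `C`. -/
def IsWheel {V : Type*} (G : SimpleGraph V) (C : Set V) (x : V) : Prop :=
  IsHole G C ∧ x ∉ C ∧ 3 ≤ (G.neighborSet x ∩ C).ncard

/-- The number of spokes of the wheel `(C, x)`. -/
noncomputable def numSpokes {V : Type*} (G : SimpleGraph V) (C : Set V) (x : V) : ℕ :=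
  (G.neighborSet x ∩ C).ncard

/-- `S` is (the vertex set of) a sector of the wheel `(C, x)`: a maximal path of the
hole `C` containing no spoke (neighbor of `x`) in its interior.  Here this is rendered
as: `S` is maximal among the subsets of `C` inducing a connected subgraph in which no
vertex with two neighbors inside the subset is a neighbor of `x`. -/
def IsSector {V : Type*} (G : SimpleGraph V) (C : Set V) (x : V) (S : Set V) : Prop :=
  S ⊆ C ∧ (G.induce S).Connected ∧
  (∀ v ∈ S, (G.neighborSet v ∩ S).ncard = 2 → ¬ G.Adj x v) ∧
  (∀ T, S ⊆ T → T ⊆ C → (G.induce T).Connected →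
    (∀ v ∈ T, (G.neighborSet v ∩ T).ncard = 2 → ¬ G.Adj x v) → T = S)

/-- The interior of a sector of a wheel with center `x`: the sector minus its two
ends (which are spokes, i.e. neighbors of `x`). -/
def sectorInterior {V : Type*} (G : SimpleGraph V) (x : V) (S : Set V) : Set V :=
  S \ G.neighborSet x

/-- The wheel `(C, x)` is a proper wheel in `G`. -/
def IsProperWheel {V : Type*} (G : SimpleGraph V) (C : Set V) (x : V) : Prop :=
  IsWheel G C x ∧ ∀ v, v ∉ C → v ≠ x →
    (∃ S, IsSector G C x S ∧ G.neighborSet v ∩ C ⊆ S) ∧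
    (3 ≤ (G.neighborSet v ∩ C).ncard → G.Adj v x)

/-- The wheel `(C, x)` is a proper wheel in the subgraph of `G` induced by `A`. -/
def IsProperWheelOn {V : Type*} (G : SimpleGraph V) (A : Set V) (C : Set V) (x : V) : Prop :=
  C ⊆ A ∧ x ∈ A ∧ IsWheel G C x ∧
  ∀ v ∈ A, v ∉ C → v ≠ x →
    (∃ S, IsSector G C x S ∧ G.neighborSet v ∩ C ⊆ S) ∧
    (3 ≤ (G.neighborSet v ∩ C).ncard → G.Adj v x)

/-- `p` is an induced path in `G`. -/
def IsInducedPath {V : Type*} {u w : V} (G : SimpleGraph V) (p : G.Walk u w) : Prop :=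
  p.IsPath ∧ ∀ a ∈ p.support, ∀ b ∈ p.support, G.Adj a b → s(a, b) ∈ p.edges

/-- `K` is (the vertex set of) a connected component of the subgraph of `G` induced
by `A`. -/
def IsCompOf {V : Type*} (G : SimpleGraph V) (A : Set V) (K : Set V) : Prop :=
  K ⊆ A ∧ (G.induce K).Connected ∧ ∀ a ∈ K, ∀ b ∈ A, G.Adj a b → b ∈ K

/-- `x` is a non-offensive vertex for the wheel `(C, v)`. -/
def NonOffensive {V : Type*} (G : SimpleGraph V) (C : Set V) (v x : V) : Prop :=
  ∃ S1 S2 : Set V, IsSector G C v S1 ∧ IsSector G C v S2 ∧ S1 ≠ S2 ∧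
    (S1 ∩ S2).Nonempty ∧ G.Adj x v ∧
    (G.neighborSet x ∩ S1).Nonempty ∧ (G.neighborSet x ∩ S2).Nonempty ∧
    G.neighborSet x ∩ C ⊆ S1 ∪ S2 ∧
    ∀ u, u ∉ C → u ≠ v → G.Adj u x → G.neighborSet u ∩ C ⊆ S1 ∪ S2

/-- `x` is an `a`-non-offensive vertex for the wheel `(C, v)`: it is non-offensive,
witnessed by two consecutive sectors meeting exactly in `{a}`. -/
def ANonOffensive {V : Type*} (G : SimpleGraph V) (C : Set V) (v a x : V) : Prop :=
  ∃ S1 S2 : Set V, IsSector G C v S1 ∧ IsSector G C v S2 ∧ S1 ≠ S2 ∧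
    S1 ∩ S2 = {a} ∧ G.Adj x v ∧
    (G.neighborSet x ∩ S1).Nonempty ∧ (G.neighborSet x ∩ S2).Nonempty ∧
    G.neighborSet x ∩ C ⊆ S1 ∪ S2 ∧
    ∀ u, u ∉ C → u ≠ v → G.Adj u x → G.neighborSet u ∩ C ⊆ S1 ∪ S2

/-- The wheel `(C, v)` is `k`-almost proper, witnessed by the spokes `xs 0, …, xs (k-1)`
(no two of which lie in a common sector) and the set `X` of vertices outside the wheel:
the wheel is proper in `G \ X`, and every member of `X` is `xs i`-non-offensive for
some `i`. -/
def IsAlmostProperWheel {V : Type*} (G : SimpleGraph V) (C : Set V) (v : V) (k : ℕ)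
    (xs : Fin k → V) (X : Set V) : Prop :=
  IsWheel G C v ∧
  (∀ i, xs i ∈ G.neighborSet v ∩ C) ∧
  (∀ i j, i ≠ j → ¬ ∃ S, IsSector G C v S ∧ xs i ∈ S ∧ xs j ∈ S) ∧
  (∀ x ∈ X, x ∉ C ∧ x ≠ v) ∧
  (∀ u, u ∉ C → u ≠ v → u ∉ X →
    (∃ S, IsSector G C v S ∧ G.neighborSet u ∩ C ⊆ S) ∧
    (3 ≤ (G.neighborSet u ∩ C).ncard → G.Adj u v)) ∧
  (∀ x ∈ X, ∃ i, ANonOffensive G C v (xs i) x)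

/-- The induced subgraph on `S` is a subdivision of `K₁,₃` with `a`, `b`, `c` as its
vertices of degree one (equivalently, a tree whose set of leaves is exactly `{a, b, c}`). -/
def IsK13SubdivisionWithLeaves {V : Type*} (G : SimpleGraph V) (S : Set V) (a b c : V) : Prop :=
  a ∈ S ∧ b ∈ S ∧ c ∈ S ∧ a ≠ b ∧ a ≠ c ∧ b ≠ c ∧
  (G.induce S).Connected ∧ (G.induce S).IsAcyclic ∧
  ∀ v ∈ S, ((G.neighborSet v ∩ S).ncard = 1 ↔ v = a ∨ v = b ∨ v = c)

/-- Adjacency relation of the graph obtained from `G` by contracting the set `K`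
to the single new vertex `none`. -/
def contractAdj {V : Type*} (G : SimpleGraph V) (K : Set V) :
    Option {v : V // v ∉ K} → Option {v : V // v ∉ K} → Prop
  | some a, some b => G.Adj a.1 b.1
  | some a, none => ∃ k ∈ K, G.Adj a.1 k
  | none, some b => ∃ k ∈ K, G.Adj k b.1
  | none, none => False

/-- The graph obtained from `G` by contracting `K` to the single new vertex `none`
(deleting arising loops and parallel edges). -/
def contractSet {V : Type*} (G : SimpleGraph V) (K : Set V) :
    SimpleGraph (Option {v : V // v ∉ K}) where
  Adj := contractAdj G K
  symm := by
    refine ⟨?_⟩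
    intro a b h
    match a, b, h with
    | none, none, h => exact False.elim h
    | none, some b, ⟨k, hk, ha⟩ => exact ⟨k, hk, ha.symm⟩
    | some a, none, ⟨k, hk, ha⟩ => exact ⟨k, hk, ha.symm⟩
    | some a, some b, h => exact G.adj_symm h
  loopless := by
    refine ⟨?_⟩
    rintro (_ | a) h
    · exact False.elim h
    · exact G.irrefl h

namespace TreeConnAux

variable {V : Type*} {G : SimpleGraph V}

lemma reach_transfer {S T : Set V} {x y : S} (p : (G.induce S).Walk x y) :
    (∀ z ∈ p.support, (z : V) ∈ T) → ∀ w ∈ p.support, ∀ (hx : (x : V) ∈ T) (hw : (w : V) ∈ T),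
      (G.induce T).Reachable ⟨x, hx⟩ ⟨w, hw⟩ := by
  induction p with
  | nil =>
    intro _ w hw hx hw'
    rw [Walk.support_nil, List.mem_singleton] at hw
    subst hw
    exact Reachable.refl _
  | @cons u u₁ yy hadj q ih =>
    intro h w hw hx hw'
    rw [Walk.support_cons, List.mem_cons] at hw
    rcases hw with rfl | hw
    · exact Reachable.refl _
    · have hu₁ : (u₁ : V) ∈ T := h u₁ (by rw [Walk.support_cons]; exact List.mem_cons_of_mem _ q.start_mem_support)
      have hadjT : (G.induce T).Adj ⟨u, hx⟩ ⟨u₁, hu₁⟩ := hadj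
      exact hadjT.reachable.trans
        (ih (fun z hz => h z (by rw [Walk.support_cons]; exact List.mem_cons_of_mem _ hz)) w hw hu₁ hw')

lemma internal_two_adj {W : Type*} {H : SimpleGraph W} {x y : W} (p : H.Walk x y) :
    p.IsPath → ∀ {v}, v ∈ p.support → v ≠ x → v ≠ y →
      ∃ s t, s ≠ t ∧ H.Adj v s ∧ H.Adj v t := by
  induction p with
  | nil =>
    intro _ v hv hvx _
    rw [Walk.support_nil, List.mem_singleton] at hv
    exact absurd hv hvx
  | @cons u u₁ yy hadj q ih =>
    intro hp v hv hvx hvy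
    rw [Walk.support_cons, List.mem_cons] at hv
    rcases hv with rfl | hv
    · exact absurd rfl hvx
    · by_cases hvu₁ : v = u₁
      · subst hvu₁
        cases q with
        | nil => exact absurd rfl hvy
        | @cons _ u₂ _ hadj₂ q' =>
          refine ⟨u, u₂, ?_, hadj.symm, hadj₂⟩
          intro huu₂
          apply ((Walk.cons_isPath_iff hadj (Walk.cons hadj₂ q')).mp hp).2
          rw [huu₂, Walk.support_cons]
          exact List.mem_cons_of_mem _ q'.start_mem_support
      · exact ih hp.of_cons hv hvu₁ hvy

lemma cycle_two_adj {W : Type*} [DecidableEq W] {H : SimpleGraph W} {u : W} {c : H.Walk u u} (hc : c.IsCycle)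
    {v : W} (hv : v ∈ c.support) : ∃ s t, s ≠ t ∧ H.Adj v s ∧ H.Adj v t := by
  have hc₁ : (c.rotate v hv).IsCycle := hc.rotate hv
  have h3 : 3 ≤ (c.rotate v hv).length := hc₁.three_le_length
  cases hceq : c.rotate v hv with
  | nil => rw [hceq] at hc₁; exact absurd hc₁ Walk.IsCycle.not_of_nil
  | @cons _ w1 _ hadj p =>
    rw [hceq] at hc₁ h3
    have hpnd : p.support.Nodup := by
      have := (Walk.isCycle_def _).mp hc₁
      rw [Walk.support_cons] at this
      exact this.2.2
    cases hpeq : p.reverse with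
    | nil => exact absurd hadj (fun h => h.ne rfl)
    | @cons _ w2 _ hadj₂ r =>
      refine ⟨w1, w2, ?_, hadj, hadj₂⟩
      intro heq
      subst heq
      have hrnd : r.support.Nodup := by
        have : p.reverse.support.Nodup := by
          rw [Walk.support_reverse]; exact List.nodup_reverse.mpr hpnd
        rw [hpeq, Walk.support_cons] at this
        exact (List.nodup_cons.mp this).2
      have hrnil : r = Walk.nil := (Walk.isPath_iff_eq_nil (p := r)).mp (Walk.IsPath.mk' hrnd)
      have hlen : p.length = 1 := by
        have h1 := p.length_reverse
        rw [hpeq, hrnil] at h1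
        simpa using h1.symm
      rw [Walk.length_cons, hlen] at h3
      omega

lemma exists_adj_of_reachable_ne {W : Type*} {H : SimpleGraph W} {x y : W} (hxy : x ≠ y)
    (h : H.Reachable x y) : ∃ t, H.Adj x t := by
  obtain ⟨p⟩ := h
  cases p with
  | nil => exact absurd rfl hxy
  | cons h q => exact ⟨_, h⟩

lemma path_avoids {S K : Set V} {x y : S} (p : (G.induce S).Walk x y) :
    p.IsPath → (∀ u ∈ K, ∀ w ∈ S, w ≠ (y : V) → G.Adj u w → w ∈ K) →
    (x : V) ∉ K → (y : V) ∉ K → ∀ z ∈ p.support, (z : V) ∉ K := by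
  induction p with
  | nil =>
    intro _ _ hx _ z hz
    rw [Walk.support_nil, List.mem_singleton] at hz
    subst hz; exact hx
  | @cons u u₁ yy hadj q ih =>
    intro hp hcl hx hy z hz
    rw [Walk.support_cons, List.mem_cons] at hz
    rcases hz with rfl | hz
    · exact hx
    · have hu₁ : (u₁ : V) ∉ K := by
        intro hmem
        have huy : u ≠ yy := by
          intro h
          apply ((Walk.cons_isPath_iff hadj q).mp hp).2
          rw [h]; exact q.end_mem_support
        exact hx (hcl _ hmem u u.2 (fun he => huy (Subtype.ext he)) (G.adj_symm hadj))
      exact ih hp.of_cons hcl hu₁ hy z hz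

end TreeConnAux

/-- In a connected graph `G` with three vertices `a`, `b`, `c` of
degree one, a minimal connected induced subgraph containing `a`, `b`, `c` is either a
subdivision of `K₁,₃` with `a`, `b`, `c` as the vertices of degree one, or contains a
triangle. -/


theorem tree_connecting {V : Type*} [Fintype V] (G : SimpleGraph V)
    (hconn : G.Connected)
    (a b c : V) (hab : a ≠ b) (hac : a ≠ c) (hbc : b ≠ c)
    (ha : (G.neighborSet a).ncard = 1) (hb : (G.neighborSet b).ncard = 1)
    (hc : (G.neighborSet c).ncard = 1)
    (S : Set V) (haS : a ∈ S) (hbS : b ∈ S) (hcS : c ∈ S)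
    (hSconn : (G.induce S).Connected)
    (hmin : ∀ T, T ⊆ S → a ∈ T → b ∈ T → c ∈ T → (G.induce T).Connected → T = S) :
    IsK13SubdivisionWithLeaves G S a b c ∨
    ∃ p q r, p ∈ S ∧ q ∈ S ∧ r ∈ S ∧ G.Adj p q ∧ G.Adj q r ∧ G.Adj p r := by
  classical
  by_cases htri : ∃ p q r, p ∈ S ∧ q ∈ S ∧ r ∈ S ∧ G.Adj p q ∧ G.Adj q r ∧ G.Adj p r
  · exact Or.inr htri
  left
  -- a vertex with two distinct neighbours in `S` cannot be a degree-one vertex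
  have hdeg2 : ∀ v : ↥S, (∃ s t : ↥S, s ≠ t ∧ (G.induce S).Adj v s ∧ (G.induce S).Adj v t) →
      ∀ ℓ : V, (G.neighborSet ℓ).ncard = 1 → (v : V) ≠ ℓ := by
    rintro v ⟨s, t, hst, hs, ht⟩ ℓ hℓ hvℓ
    have hsub : ({(s : V), (t : V)} : Set V) ⊆ G.neighborSet ℓ := by
      intro z hz
      simp only [Set.mem_insert_iff, Set.mem_singleton_iff] at hz
      rcases hz with rfl | rfl
      · exact hvℓ ▸ (hs : G.Adj (v : V) (s : V))
      · exact hvℓ ▸ (ht : G.Adj (v : V) (t : V))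
    have hle := Set.ncard_le_ncard hsub (Set.toFinite _)
    rw [Set.ncard_pair (fun h => hst (Subtype.ext h)), hℓ] at hle
    omega
  -- removing a vertex other than a, b, c disconnects S
  have hremove : ∀ v, v ∈ S → v ≠ a → v ≠ b → v ≠ c → ¬ (G.induce (S \ {v})).Connected := by
    intro v hvS hva hvb hvc hconn'
    have h := hmin (S \ {v}) Set.diff_subset
      ⟨haS, fun h => hva (Set.mem_singleton_iff.mp h).symm⟩
      ⟨hbS, fun h => hvb (Set.mem_singleton_iff.mp h).symm⟩
      ⟨hcS, fun h => hvc (Set.mem_singleton_iff.mp h).symm⟩ hconn'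
    have : v ∈ S \ {v} := h.symm ▸ hvS
    exact this.2 rfl
  -- the induced graph on S is acyclic
  have hacyc : (G.induce S).IsAcyclic := by
    intro u c0 hc0
    rcases Nat.lt_or_ge c0.length 4 with h4 | h4
    · -- length 3, extract a triangle
      have h3 : c0.length = 3 := le_antisymm (by omega) hc0.three_le_length
      cases c0 with
      | nil => simp at h3
      | @cons _ x1 _ h₁ d =>
        cases d with
        | nil => simp at h3
        | @cons _ x2 _ h₂ e =>
          cases e with
          | nil => simp at h3
          | @cons _ x3 _ h₃ f =>
            cases f with
            | @cons _ x4 _ h₄ g => simp only [Walk.length_cons] at h3; omega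
            | nil =>
              exact htri ⟨u, x1, x2, u.2, x1.2, x2.2,
                (h₁ : G.Adj (u : V) (x1 : V)), (h₂ : G.Adj (x1 : V) (x2 : V)),
                ((h₃ : G.Adj (x2 : V) (u : V))).symm⟩
    · -- length at least 4
      have hnd : c0.support.tail.Nodup := ((Walk.isCycle_def c0).mp hc0).2.2
      have hlen : 4 ≤ c0.support.tail.length := by
        have h1 := c0.length_support
        have h2 : c0.support.tail.length = c0.support.length - 1 := List.length_tail
        omega
      -- main separation claim
      have claim : ∀ v : ↥S, v ∈ c0.support.tail → ∃ ℓ, (ℓ = a ∨ ℓ = b ∨ ℓ = c) ∧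
          ∀ w : ↥S, w ∈ c0.support.tail → w ≠ v →
            ¬ ∃ (hℓ : ℓ ∈ S \ {(v : V)}) (hw : (w : V) ∈ S \ {(v : V)}),
              (G.induce (S \ {(v : V)})).Reachable ⟨ℓ, hℓ⟩ ⟨(w : V), hw⟩ := by
        intro v hvl
        have hv : v ∈ c0.support := c0.support_eq_cons ▸ List.mem_cons_of_mem _ hvl
        obtain ⟨s, t, hst, hs, ht⟩ := TreeConnAux.cycle_two_adj hc0 hv
        have hva : (v : V) ≠ a := hdeg2 v ⟨s, t, hst, hs, ht⟩ a ha
        have hvb : (v : V) ≠ b := hdeg2 v ⟨s, t, hst, hs, ht⟩ b hb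
        have hvc : (v : V) ≠ c := hdeg2 v ⟨s, t, hst, hs, ht⟩ c hc
        have haT : a ∈ S \ {(v : V)} := ⟨haS, fun h => hva (Set.mem_singleton_iff.mp h).symm⟩
        have hbT : b ∈ S \ {(v : V)} := ⟨hbS, fun h => hvb (Set.mem_singleton_iff.mp h).symm⟩
        have hcT : c ∈ S \ {(v : V)} := ⟨hcS, fun h => hvc (Set.mem_singleton_iff.mp h).symm⟩
        have hnotconn := hremove (v : V) v.2 hva hvb hvc
        -- decompose the rotated cycle
        obtain ⟨w1, hadj, p, hceq⟩ :
            ∃ (w1 : ↥S) (hadj : (G.induce S).Adj v w1) (p : (G.induce S).Walk w1 v),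
              c0.rotate v hv = Walk.cons hadj p := by
          cases hceq : c0.rotate v hv with
          | nil => exact absurd (hceq ▸ hc0.rotate hv) Walk.IsCycle.not_of_nil
          | cons hadj p => exact ⟨_, hadj, p, rfl⟩
        have hc₁ : (Walk.cons hadj p).IsCycle := hceq ▸ hc0.rotate hv
        have hpnd : p.support.Nodup := by
          have h' := (Walk.isCycle_def _).mp hc₁
          rw [Walk.support_cons] at h'
          exact h'.2.2
        obtain ⟨w2, hadj₂, r, hreq⟩ :
            ∃ (w2 : ↥S) (hadj₂ : (G.induce S).Adj v w2) (r : (G.induce S).Walk w2 w1),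
              p.reverse = Walk.cons hadj₂ r := by
          cases hreq : p.reverse with
          | nil => exact absurd hadj (fun h => h.ne rfl)
          | cons hadj₂ r => exact ⟨_, hadj₂, r, rfl⟩
        have hvnr : v ∉ r.support := by
          have hrev : p.reverse.support.Nodup := by
            rw [Walk.support_reverse]; exact List.nodup_reverse.mpr hpnd
          rw [hreq, Walk.support_cons] at hrev
          exact (List.nodup_cons.mp hrev).1
        have hmemr : ∀ w : ↥S, w ∈ p.support → w ≠ v → w ∈ r.support := by
          intro w hw hwv
          have h' : w ∈ p.reverse.support := by
            rw [Walk.support_reverse, List.mem_reverse]; exact hw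
          rw [hreq, Walk.support_cons, List.mem_cons] at h'
          exact h'.resolve_left hwv
        have hrT : ∀ z ∈ r.support, (z : V) ∈ S \ {(v : V)} := by
          intro z hz
          refine ⟨z.2, fun h => ?_⟩
          have hzv : z = v := Subtype.ext (Set.mem_singleton_iff.mp h)
          exact hvnr (hzv ▸ hz)
        have hw2T : (w2 : V) ∈ S \ {(v : V)} := hrT w2 r.start_mem_support
        have hreachr := TreeConnAux.reach_transfer r hrT
        have htailmem : ∀ w : ↥S, w ∈ c0.support.tail → w ∈ p.support := by
          intro w hw
          have h1 : w ∈ (c0.rotate v hv).support.tail := ((c0.support_rotate v hv).mem_iff).mpr hw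
          rw [hceq, Walk.support_cons, List.tail_cons] at h1
          exact h1
        have hTne : Nonempty ↥(S \ {(v : V)}) := ⟨⟨a, haT⟩⟩
        have hnp : ¬ (G.induce (S \ {(v : V)})).Preconnected := fun h => hnotconn ((connected_iff _).mpr ⟨h, hTne⟩)
        obtain ⟨x0, y0, hxy0⟩ : ∃ x0 y0 : ↥(S \ {(v : V)}),
            ¬ (G.induce (S \ {(v : V)})).Reachable x0 y0 := by
          by_contra h'
          push_neg at h'
          exact hnp fun x y => h' x y
        obtain ⟨z, hz⟩ : ∃ z : ↥(S \ {(v : V)}),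
            ¬ (G.induce (S \ {(v : V)})).Reachable ⟨(w2 : V), hw2T⟩ z := by
          by_contra h'
          push_neg at h'
          exact hxy0 ((h' x0).symm.trans (h' y0))
        set K : Set V :=
          {y | ∃ hy : y ∈ S \ {(v : V)}, (G.induce (S \ {(v : V)})).Reachable z ⟨y, hy⟩}
          with hKdef
        have hzK : (z : V) ∈ K := ⟨z.2, Reachable.refl _⟩
        have hKT : K ⊆ S \ {(v : V)} := by rintro y ⟨hy, -⟩; exact hy
        have hKcl : ∀ u' ∈ K, ∀ w' ∈ S, w' ≠ (v : V) → G.Adj u' w' → w' ∈ K := by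
          rintro u' ⟨hu'T, hu'r⟩ w' hw'S hw'v hadj'
          have hw'T : w' ∈ S \ {(v : V)} := ⟨hw'S, fun h => hw'v (Set.mem_singleton_iff.mp h)⟩
          exact ⟨hw'T, hu'r.trans (SimpleGraph.Adj.reachable
            (show (G.induce (S \ {(v : V)})).Adj ⟨u', hu'T⟩ ⟨w', hw'T⟩ from hadj'))⟩
        have hleaf : a ∈ K ∨ b ∈ K ∨ c ∈ K := by
          by_contra hno
          push_neg at hno
          obtain ⟨hna, hnb, hnc⟩ := hno
          have hvK : (v : V) ∉ K := fun h => (hKT h).2 rfl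
          have hvSK : (v : V) ∈ S \ K := ⟨v.2, hvK⟩
          have hreachv : ∀ x : ↥(S \ K), (G.induce (S \ K)).Reachable x ⟨(v : V), hvSK⟩ := by
            intro x
            obtain ⟨wlk⟩ := hSconn.preconnected ⟨(x : V), x.2.1⟩ v
            have hpp := wlk.bypass_isPath
            have havoid := TreeConnAux.path_avoids wlk.bypass hpp hKcl x.2.2 hvK
            have hsub : ∀ zz ∈ wlk.bypass.support, (zz : V) ∈ S \ K :=
              fun zz hzz => ⟨zz.2, havoid zz hzz⟩
            exact TreeConnAux.reach_transfer wlk.bypass hsub v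
              wlk.bypass.end_mem_support x.2 hvSK
          have hSK : (G.induce (S \ K)).Connected :=
            (connected_iff _).mpr ⟨fun x y => (hreachv x).trans (hreachv y).symm, ⟨⟨a, haS, hna⟩⟩⟩
          have heq := hmin (S \ K) Set.diff_subset ⟨haS, hna⟩ ⟨hbS, hnb⟩ ⟨hcS, hnc⟩ hSK
          have hz2 : (z : V) ∈ S \ K := heq.symm ▸ (z.2.1 : (z : V) ∈ S)
          exact hz2.2 hzK
        obtain ⟨ℓ, hℓabc, hℓK⟩ : ∃ ℓ, (ℓ = a ∨ ℓ = b ∨ ℓ = c) ∧ ℓ ∈ K := by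
          rcases hleaf with h | h | h
          exacts [⟨a, Or.inl rfl, h⟩, ⟨b, Or.inr (Or.inl rfl), h⟩, ⟨c, Or.inr (Or.inr rfl), h⟩]
        refine ⟨ℓ, hℓabc, ?_⟩
        rintro w hw hwv ⟨hℓT, hwT, hreach⟩
        obtain ⟨hℓT', hzℓ⟩ := hℓK
        have hmem := hmemr w (htailmem w hw) hwv
        have hreach2 := hreachr w hmem hw2T (hrT w hmem)
        exact hz (hreach2.trans (hzℓ.trans hreach).symm)
      -- pick four distinct cycle vertices and apply the pigeonhole principle
      let f : Fin 4 → ↥S := fun i => c0.support.tail.get ⟨i, lt_of_lt_of_le i.isLt hlen⟩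
      have hfmem : ∀ i, f i ∈ c0.support.tail := fun i => List.get_mem _ _
      have hfinj : ∀ i j : Fin 4, f i = f j → i = j := by
        intro i j hij
        have h' := hnd.get_inj_iff.mp hij
        exact Fin.ext (by simpa using congrArg Fin.val h')
      choose g hg1 hg2 using fun i => claim (f i) (hfmem i)
      obtain ⟨i, -, j, -, hij, hgeq⟩ :=
        Finset.exists_ne_map_eq_of_card_lt_of_maps_to
          (s := (Finset.univ : Finset (Fin 4))) (t := ({a, b, c} : Finset V)) (f := g)
          (by
            have h1 := Finset.card_insert_le a ({b, c} : Finset V)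
            have h2 := Finset.card_insert_le b ({c} : Finset V)
            simp only [Finset.card_singleton] at *
            simp only [Finset.card_univ, Fintype.card_fin]
            omega)
          (fun i _ => by rcases hg1 i with h | h | h <;> simp [h])
      have hvij : f i ≠ f j := fun h => hij (hfinj i j h)
      have hℓS : g i ∈ S := by rcases hg1 i with h | h | h <;> rw [h] <;> assumption
      have hnotcyc : ∀ w : ↥S, w ∈ c0.support.tail → (w : V) ≠ g i := by
        intro w hw
        have hwsup : w ∈ c0.support := c0.support_eq_cons ▸ List.mem_cons_of_mem _ hw
        obtain ⟨s, t, hst, hs, ht⟩ := TreeConnAux.cycle_two_adj hc0 hwsup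
        rcases hg1 i with h | h | h <;> rw [h]
        · exact hdeg2 w ⟨s, t, hst, hs, ht⟩ a ha
        · exact hdeg2 w ⟨s, t, hst, hs, ht⟩ b hb
        · exact hdeg2 w ⟨s, t, hst, hs, ht⟩ c hc
      have hℓvi : g i ∈ S \ {((f i) : V)} :=
        ⟨hℓS, fun h => hnotcyc (f i) (hfmem i) (Set.mem_singleton_iff.mp h).symm⟩
      have hℓvj : g i ∈ S \ {((f j) : V)} :=
        ⟨hℓS, fun h => hnotcyc (f j) (hfmem j) (Set.mem_singleton_iff.mp h).symm⟩
      obtain ⟨wlk⟩ := hSconn.preconnected ⟨g i, hℓS⟩ (f i)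
      have hpp := wlk.bypass_isPath
      by_cases hjmem : f j ∈ wlk.bypass.support
      · have hqvi : f i ∉ (wlk.bypass.takeUntil (f j) hjmem).support := by
          intro hmem
          have hspec := wlk.bypass.take_spec hjmem
          have hnd' : wlk.bypass.support.Nodup := hpp.support_nodup
          rw [← hspec, Walk.support_append] at hnd'
          have hvid : f i ∈ (wlk.bypass.dropUntil (f j) hjmem).support :=
            Walk.end_mem_support _
          have hvtail : f i ∈ (wlk.bypass.dropUntil (f j) hjmem).support.tail := by
            have hcons := (wlk.bypass.dropUntil (f j) hjmem).support_eq_cons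
            rw [hcons, List.mem_cons] at hvid
            exact hvid.resolve_left hvij
          exact (List.disjoint_of_nodup_append hnd') hmem hvtail
        have hsub : ∀ zz ∈ (wlk.bypass.takeUntil (f j) hjmem).support,
            (zz : V) ∈ S \ {((f i) : V)} := by
          intro zz hzz
          refine ⟨zz.2, fun h => hqvi ?_⟩
          have hzfi : zz = f i := Subtype.ext (Set.mem_singleton_iff.mp h)
          exact hzfi ▸ hzz
        have hreach := TreeConnAux.reach_transfer (wlk.bypass.takeUntil (f j) hjmem) hsub
          (f j) (wlk.bypass.takeUntil (f j) hjmem).end_mem_support hℓvi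
          (hsub (f j) (wlk.bypass.takeUntil (f j) hjmem).end_mem_support)
        exact hg2 i (f j) (hfmem j) (fun h => hvij h.symm)
          ⟨hℓvi, hsub (f j) (wlk.bypass.takeUntil (f j) hjmem).end_mem_support, hreach⟩
      · have hsub : ∀ zz ∈ wlk.bypass.support, (zz : V) ∈ S \ {((f j) : V)} := by
          intro zz hzz
          refine ⟨zz.2, fun h => hjmem ?_⟩
          have hzfj : zz = f j := Subtype.ext (Set.mem_singleton_iff.mp h)
          exact hzfj ▸ hzz
        have hreach := TreeConnAux.reach_transfer wlk.bypass hsub (f i)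
          wlk.bypass.end_mem_support hℓvj (hsub (f i) wlk.bypass.end_mem_support)
        have hg2j := hg2 j (f i) (hfmem i) hvij
        rw [← hgeq] at hg2j
        exact hg2j ⟨hℓvj, hsub (f i) wlk.bypass.end_mem_support, hreach⟩
  -- degree-one characterisation
  have hncard1 : ∀ ℓ m : V, ℓ ∈ S → m ∈ S → ℓ ≠ m → (G.neighborSet ℓ).ncard = 1 →
      (G.neighborSet ℓ ∩ S).ncard = 1 := by
    intro ℓ m hℓS hmS hℓm hℓ
    obtain ⟨t, hadj⟩ := TreeConnAux.exists_adj_of_reachable_ne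
      (show (⟨ℓ, hℓS⟩ : ↥S) ≠ ⟨m, hmS⟩ from fun h => hℓm (congrArg Subtype.val h))
      (hSconn.preconnected ⟨ℓ, hℓS⟩ ⟨m, hmS⟩)
    have hne : (G.neighborSet ℓ ∩ S).Nonempty := ⟨t, (hadj : G.Adj ℓ (t : V)), t.2⟩
    have hle := Set.ncard_le_ncard (s := G.neighborSet ℓ ∩ S) (t := G.neighborSet ℓ)
      Set.inter_subset_left (Set.toFinite _)
    rw [hℓ] at hle
    have hpos : 0 < (G.neighborSet ℓ ∩ S).ncard := (Set.ncard_pos (Set.toFinite _)).mpr hne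
    omega
  refine ⟨haS, hbS, hcS, hab, hac, hbc, hSconn, hacyc, ?_⟩
  intro v hvS
  constructor
  · intro h1
    by_contra hno
    push_neg at hno
    obtain ⟨hva, hvb, hvc⟩ := hno
    apply hremove v hvS hva hvb hvc
    have haT : a ∈ S \ {v} := ⟨haS, fun h => hva ((Set.mem_singleton_iff.mp h).symm ▸ rfl)⟩
    have hstep : ∀ x : ↥(S \ {v}), (G.induce (S \ {v})).Reachable x ⟨a, haT⟩ := by
      intro x
      obtain ⟨wlk⟩ := hSconn.preconnected ⟨(x : V), x.2.1⟩ ⟨a, haS⟩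
      have hpp := wlk.bypass_isPath
      have havoid : ∀ zz ∈ wlk.bypass.support, (zz : V) ≠ v := by
        intro zz hzz hzv
        obtain ⟨s, t, hst, hs, ht⟩ := TreeConnAux.internal_two_adj wlk.bypass hpp hzz
          (fun h => x.2.2 (Set.mem_singleton_iff.mpr
            ((congrArg Subtype.val h).symm.trans hzv)))
          (fun h => hva (hzv.symm.trans (congrArg Subtype.val h)))
        have hsub2 : ({(s : V), (t : V)} : Set V) ⊆ G.neighborSet v ∩ S := by
          intro z hz
          simp only [Set.mem_insert_iff, Set.mem_singleton_iff] at hz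
          rcases hz with rfl | rfl
          · exact ⟨hzv ▸ (hs : G.Adj (zz : V) (s : V)), s.2⟩
          · exact ⟨hzv ▸ (ht : G.Adj (zz : V) (t : V)), t.2⟩
        have hle := Set.ncard_le_ncard hsub2 (Set.toFinite _)
        rw [Set.ncard_pair (fun h => hst (Subtype.ext h)), h1] at hle
        omega
      have hsub : ∀ zz ∈ wlk.bypass.support, (zz : V) ∈ S \ {v} :=
        fun zz hzz => ⟨zz.2, fun h => havoid zz hzz (Set.mem_singleton_iff.mp h)⟩
      exact TreeConnAux.reach_transfer wlk.bypass hsub ⟨a, haS⟩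
        wlk.bypass.end_mem_support x.2 haT
    exact (connected_iff _).mpr ⟨fun x y => (hstep x).trans (hstep y).symm, ⟨⟨a, haT⟩⟩⟩
  · rintro (rfl | rfl | rfl)
    · exact hncard1 v b hvS hbS hab ha
    · exact hncard1 v a hvS haS (Ne.symm hab) hb
    · exact hncard1 v a hvS haS (Ne.symm hac) hc
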